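/- Let N, R : ℝ² → ℝ³ be twice continuously differentiable with ⟨N(p), R_x(p)⟩ = 0, ⟨N(p), R_y(p)⟩ = 0 and det(N(p), N_x(p), N_y(p)) ≠ 0 for every p ∈ ℝ². Then there exist functions A, S, B : ℝ² → ℝ such that at every point R_y = A·(N × N_x) + S·(N × N_y) and R_x = −S·(N × N_x) − B·(N × N_y); moreover, for any such A, S, B one has R_x × R_y = (A·B − S²)·det(N, N_x, N_y)·N at every point. (In particular the single function S appears in both decompositions: the mixed coefficients P and Q of the a priori decompositions R_y = A(N×N_x) + P(N×N_y), R_x = −Q(N×N_x) − B(N×N_y) coincide.) -/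

import Mathlib

open Matrix

/-- Partial derivative with respect to the first coordinate. -/
noncomputable def pdx (f : ℝ × ℝ → (Fin 3 → ℝ)) (p : ℝ × ℝ) : Fin 3 → ℝ :=
  fderiv ℝ f p (1, 0)

/-- Partial derivative with respect to the second coordinate. -/
noncomputable def pdy (f : ℝ × ℝ → (Fin 3 → ℝ)) (p : ℝ × ℝ) : Fin 3 → ℝ :=
  fderiv ℝ f p (0, 1)

/-- Determinant of the 3×3 matrix with rows `u`, `v`, `w`. -/
noncomputable def det3 (u v w : Fin 3 → ℝ) : ℝ :=
  (Matrix.of ![u, v, w]).det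

/-- Decomposition of a vector orthogonal-ish to `n` over the basis
`n ⨯₃ x`, `n ⨯₃ y`, `x ⨯₃ y`: a pure polynomial identity. -/
lemma lelieuvre_decomp_identity (n x y v : Fin 3 → ℝ) :
    det3 n x y • v
      = (v ⬝ᵥ y) • (n ⨯₃ x) - (v ⬝ᵥ x) • (n ⨯₃ y) + (n ⬝ᵥ v) • (x ⨯₃ y) := by
  funext i
  fin_cases i <;>
    simp [det3, crossProduct, dotProduct, Fin.sum_univ_three, Matrix.det_fin_three] <;> ring

/-- Cross product of the decomposed tangent vectors: a pure polynomial identity. -/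
lemma lelieuvre_cross_identity (n x y : Fin 3 → ℝ) (a s b : ℝ) :
    (-(s • (n ⨯₃ x)) - b • (n ⨯₃ y)) ⨯₃ (a • (n ⨯₃ x) + s • (n ⨯₃ y))
      = ((a * b - s ^ 2) * det3 n x y) • n := by
  funext i
  fin_cases i <;>
    simp [det3, crossProduct, Fin.sum_univ_three, Matrix.det_fin_three] <;> ring

/-- Differentiating the orthogonality relation `⟨N, ∂_w R⟩ = 0` in direction `v`. -/
lemma lelieuvre_aux_deriv (N R : ℝ × ℝ → (Fin 3 → ℝ))
    (hN : ContDiff ℝ 2 N) (hR : ContDiff ℝ 2 R) (w : ℝ × ℝ)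
    (h0 : ∀ q, N q ⬝ᵥ fderiv ℝ R q w = 0) (p v : ℝ × ℝ) :
    fderiv ℝ N p v ⬝ᵥ fderiv ℝ R p w
      + N p ⬝ᵥ (fderiv ℝ (fderiv ℝ R) p v w) = 0 := by
  have hNd : HasFDerivAt N (fderiv ℝ N p) p :=
    ((hN.differentiable (by norm_num)) p).hasFDerivAt
  have hΦdiff : Differentiable ℝ (fderiv ℝ R) :=
    (hR.fderiv_right (m := 1) (by norm_num)).differentiable (by norm_num)
  have hΦd : HasFDerivAt (fderiv ℝ R) (fderiv ℝ (fderiv ℝ R) p) p :=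
    (hΦdiff p).hasFDerivAt
  have hNi : ∀ i : Fin 3, HasFDerivAt (fun q => N q i)
      ((ContinuousLinearMap.proj i).comp (fderiv ℝ N p)) p := fun i =>
    ((ContinuousLinearMap.proj i : (Fin 3 → ℝ) →L[ℝ] ℝ)).hasFDerivAt.comp p hNd
  have hRi : ∀ i : Fin 3, HasFDerivAt (fun q => fderiv ℝ R q w i)
      (((ContinuousLinearMap.proj i).comp
        (ContinuousLinearMap.apply ℝ (Fin 3 → ℝ) w)).comp (fderiv ℝ (fderiv ℝ R) p)) p := fun i =>
    ((ContinuousLinearMap.proj i : (Fin 3 → ℝ) →L[ℝ] ℝ).comp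
        (ContinuousLinearMap.apply ℝ (Fin 3 → ℝ) w)).hasFDerivAt.comp p hΦd
  have H : HasFDerivAt (fun q => N q ⬝ᵥ fderiv ℝ R q w)
      (∑ i : Fin 3,
        ((N p i) • (((ContinuousLinearMap.proj i).comp
            (ContinuousLinearMap.apply ℝ (Fin 3 → ℝ) w)).comp (fderiv ℝ (fderiv ℝ R) p))
          + (fderiv ℝ R p w i) • ((ContinuousLinearMap.proj i).comp (fderiv ℝ N p)))) p := by
    have := HasFDerivAt.fun_sum (u := Finset.univ)
      (fun i (_ : i ∈ Finset.univ) => (hNi i).mul (hRi i))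
    simpa [dotProduct] using this
  have H0 : HasFDerivAt (fun q => N q ⬝ᵥ fderiv ℝ R q w) (0 : (ℝ × ℝ) →L[ℝ] ℝ) p := by
    have : (fun q => N q ⬝ᵥ fderiv ℝ R q w) = fun _ => (0:ℝ) := funext h0
    rw [this]; exact hasFDerivAt_const (0:ℝ) p
  have hz := H.unique H0
  have := congrArg (fun L : (ℝ × ℝ) →L[ℝ] ℝ => L v) hz
  simp [dotProduct, Fin.sum_univ_three] at this ⊢
  linarith

/-- The mixed coefficients agree: `⟨N_x, R_y⟩ = ⟨N_y, R_x⟩`. -/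
lemma lelieuvre_mixed (N R : ℝ × ℝ → (Fin 3 → ℝ))
    (hN : ContDiff ℝ 2 N) (hR : ContDiff ℝ 2 R)
    (hx : ∀ p, N p ⬝ᵥ pdx R p = 0) (hy : ∀ p, N p ⬝ᵥ pdy R p = 0) (p : ℝ × ℝ) :
    pdx N p ⬝ᵥ pdy R p = pdy N p ⬝ᵥ pdx R p := by
  have h1 := lelieuvre_aux_deriv N R hN hR (0, 1) (fun q => hy q) p (1, 0)
  have h2 := lelieuvre_aux_deriv N R hN hR (1, 0) (fun q => hx q) p (0, 1)
  have hf : ∀ y, HasFDerivAt R (fderiv ℝ R y) y := fun y =>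
    ((hR.differentiable (by norm_num)) y).hasFDerivAt
  have hΦdiff : Differentiable ℝ (fderiv ℝ R) :=
    (hR.fderiv_right (m := 1) (by norm_num)).differentiable (by norm_num)
  have hs := second_derivative_symmetric hf (hΦdiff p).hasFDerivAt (1, 0) (0, 1)
  rw [hs] at h1
  unfold pdx pdy
  linarith

/-- Lelieuvre decomposition for a generic surface: the tangent vectors `R_x`, `R_y`
decompose over `N × N_x`, `N × N_y` with a single mixed coefficient `S`, and for any
such decomposition `R_x × R_y = (AB − S²)·det(N, N_x, N_y)·N`. -/
theorem lelieuvre_decomposition_surface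
    (N R : ℝ × ℝ → (Fin 3 → ℝ))
    (hN : ContDiff ℝ 2 N) (hR : ContDiff ℝ 2 R)
    (hx : ∀ p, N p ⬝ᵥ pdx R p = 0) (hy : ∀ p, N p ⬝ᵥ pdy R p = 0)
    (hreg : ∀ p, det3 (N p) (pdx N p) (pdy N p) ≠ 0) :
    (∃ A S B : ℝ × ℝ → ℝ, ∀ p,
        pdy R p = A p • (N p ⨯₃ pdx N p) + S p • (N p ⨯₃ pdy N p) ∧
        pdx R p = -(S p • (N p ⨯₃ pdx N p)) - B p • (N p ⨯₃ pdy N p)) ∧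
    (∀ A S B : ℝ × ℝ → ℝ,
      (∀ p, pdy R p = A p • (N p ⨯₃ pdx N p) + S p • (N p ⨯₃ pdy N p) ∧
            pdx R p = -(S p • (N p ⨯₃ pdx N p)) - B p • (N p ⨯₃ pdy N p)) →
      ∀ p, pdx R p ⨯₃ pdy R p
        = ((A p * B p - S p ^ 2) * det3 (N p) (pdx N p) (pdy N p)) • N p) := by
  constructor
  · refine ⟨fun p => (pdy R p ⬝ᵥ pdy N p) / det3 (N p) (pdx N p) (pdy N p),
      fun p => -(pdy R p ⬝ᵥ pdx N p) / det3 (N p) (pdx N p) (pdy N p),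
      fun p => (pdx R p ⬝ᵥ pdx N p) / det3 (N p) (pdx N p) (pdy N p), fun p => ?_⟩
    have hd0 : det3 (N p) (pdx N p) (pdy N p) ≠ 0 := hreg p
    set d : ℝ := det3 (N p) (pdx N p) (pdy N p) with hd
    have key := lelieuvre_mixed N R hN hR hx hy p
    constructor
    · have h1 : d • pdy R p = (pdy R p ⬝ᵥ pdy N p) • (N p ⨯₃ pdx N p)
          - (pdy R p ⬝ᵥ pdx N p) • (N p ⨯₃ pdy N p) := by
        have := lelieuvre_decomp_identity (N p) (pdx N p) (pdy N p) (pdy R p)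
        rw [hy p] at this
        simpa using this
      have h2 : pdy R p = d⁻¹ • ((pdy R p ⬝ᵥ pdy N p) • (N p ⨯₃ pdx N p)
          - (pdy R p ⬝ᵥ pdx N p) • (N p ⨯₃ pdy N p)) := by
        rw [← h1, inv_smul_smul₀ hd0]
      rw [h2]
      module
    · have h1 : d • pdx R p = (pdx R p ⬝ᵥ pdy N p) • (N p ⨯₃ pdx N p)
          - (pdx R p ⬝ᵥ pdx N p) • (N p ⨯₃ pdy N p) := by
        have := lelieuvre_decomp_identity (N p) (pdx N p) (pdy N p) (pdx R p)
        rw [hx p] at this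
        simpa using this
      have hcoef : pdx R p ⬝ᵥ pdy N p = pdy R p ⬝ᵥ pdx N p := by
        rw [dotProduct_comm, ← key, dotProduct_comm]
      rw [hcoef] at h1
      have h2 : pdx R p = d⁻¹ • ((pdy R p ⬝ᵥ pdx N p) • (N p ⨯₃ pdx N p)
          - (pdx R p ⬝ᵥ pdx N p) • (N p ⨯₃ pdy N p)) := by
        rw [← h1, inv_smul_smul₀ hd0]
      rw [h2]
      module
  · intro A S B hABS p
    obtain ⟨h1, h2⟩ := hABS p
    rw [h1, h2]
    exact lelieuvre_cross_identity (N p) (pdx N p) (pdy N p) (A p) (S p) (B p)
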